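/- For C₁ = 2 and C₂ = 8, the function h(z) = −2 − 6/(arctan z + C)² solves the ODE (z²+1)²h'' + 2z(z²+1)h' + h² + 4h + 4 = 0 on any interval of z where arctan z + C ≠ 0. -/

import Mathlib

open Real

private lemma aux1 (C y : ℝ) (hy : Real.arctan y + C ≠ 0) :
    HasDerivAt (fun z => -2 - 6 / (Real.arctan z + C) ^ 2)
      (12 / ((Real.arctan y + C) ^ 3 * (1 + y ^ 2))) y := by
  have hden : (1 : ℝ) + y ^ 2 ≠ 0 := by positivity
  have h1 : HasDerivAt (fun z => Real.arctan z + C) (1 / (1 + y ^ 2)) y :=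
    (Real.hasDerivAt_arctan y).add_const C
  have h2 : HasDerivAt (fun z => (Real.arctan z + C) ^ 2)
      (2 * (Real.arctan y + C) * (1 / (1 + y ^ 2))) y := by
    simpa [mul_comm, mul_assoc] using h1.fun_pow 2
  have h3 := (hasDerivAt_const y (6 : ℝ)).div h2 (pow_ne_zero 2 hy)
  have h4 := h3.const_sub (-2 : ℝ)
  refine h4.congr_deriv ?_
  field_simp
  ring

private lemma aux2 (C y : ℝ) (hy : Real.arctan y + C ≠ 0) :
    HasDerivAt (fun z => 12 / ((Real.arctan z + C) ^ 3 * (1 + z ^ 2)))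
      ((-36 / (Real.arctan y + C) ^ 4 - 24 * y / (Real.arctan y + C) ^ 3)
        / (1 + y ^ 2) ^ 2) y := by
  have hden : (1 : ℝ) + y ^ 2 ≠ 0 := by positivity
  have h1 : HasDerivAt (fun z => Real.arctan z + C) (1 / (1 + y ^ 2)) y :=
    (Real.hasDerivAt_arctan y).add_const C
  have h2 : HasDerivAt (fun z => (Real.arctan z + C) ^ 3)
      (3 * (Real.arctan y + C) ^ 2 * (1 / (1 + y ^ 2))) y := by
    simpa [mul_comm, mul_assoc] using h1.fun_pow 3
  have h3 : HasDerivAt (fun z : ℝ => 1 + z ^ 2) (2 * y) y := by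
    simpa using ((hasDerivAt_pow 2 y).const_add 1)
  have h4 := h2.mul h3
  have h5 := (hasDerivAt_const y (12 : ℝ)).div h4
    (mul_ne_zero (pow_ne_zero 3 hy) hden)
  refine h5.congr_deriv ?_
  simp only [Pi.mul_apply]
  field_simp
  ring

theorem stmt13 (C : ℝ) :
    let h : ℝ → ℝ := fun z => -2 - 6 / (Real.arctan z + C) ^ 2
    ∀ z : ℝ, Real.arctan z + C ≠ 0 →
      (z ^ 2 + 1) ^ 2 * deriv (deriv h) z + 2 * z * (z ^ 2 + 1) * deriv h z
        + (h z) ^ 2 + 4 * h z + 4 = 0 := by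
  intro h z hz
  have hcont : Continuous fun z : ℝ => Real.arctan z + C :=
    Real.continuous_arctan.add continuous_const
  have hopen : IsOpen {z : ℝ | Real.arctan z + C ≠ 0} :=
    isOpen_compl_singleton.preimage hcont
  have hmem : {z : ℝ | Real.arctan z + C ≠ 0} ∈ nhds z :=
    hopen.mem_nhds hz
  have heq : deriv h =ᶠ[nhds z]
      fun z => 12 / ((Real.arctan z + C) ^ 3 * (1 + z ^ 2)) := by
    filter_upwards [hmem] with y hy
    exact (aux1 C y hy).deriv
  have hd2 : deriv (deriv h) z
      = (-36 / (Real.arctan z + C) ^ 4 - 24 * z / (Real.arctan z + C) ^ 3)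
        / (1 + z ^ 2) ^ 2 := by
    rw [heq.deriv_eq]
    exact (aux2 C z hz).deriv
  have hd1 : deriv h z = 12 / ((Real.arctan z + C) ^ 3 * (1 + z ^ 2)) :=
    (aux1 C z hz).deriv
  have hden : (1 : ℝ) + z ^ 2 ≠ 0 := by positivity
  simp only [h, hd1, hd2]
  field_simp
  ring
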